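/- A regular semigroup S is L-unipotent if and only if e*f*e = f*e for all idempotents e, f ∈ S. -/
import Mathlib


/-- The principal left ideal `Sa = {x*a : x ∈ S}` of an element of a semigroup. -/
def leftIdeal {S : Type*} [Semigroup S] (a : S) : Set S := {y | ∃ x : S, y = x * a}

/-- The principal right ideal `aS = {a*x : x ∈ S}` of an element of a semigroup. -/
def rightIdeal {S : Type*} [Semigroup S] (a : S) : Set S := {y | ∃ x : S, y = a * x}

/-- A semigroup is (von Neumann) regular if every element `a` has some `x` with `a*x*a = a`. -/
def IsRegularSemigroup (S : Type*) [Semigroup S] : Prop :=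
  ∀ a : S, ∃ x : S, a * x * a = a

/-- A regular semigroup is `L`-unipotent if any two `L`-related idempotents are equal. -/
def IsLUnipotent (S : Type*) [Semigroup S] : Prop :=
  IsRegularSemigroup S ∧
    ∀ e f : S, e * e = e → f * f = f → leftIdeal e = leftIdeal f → e = f

/-- If `p = p*q` and `q = q*p` then `p` and `q` generate the same left ideal. -/
lemma lid_eq {S : Type*} [Semigroup S] {p q : S} (h1 : p * q = p) (h2 : q * p = q) :
    leftIdeal p = leftIdeal q := by
  ext z
  constructor
  · rintro ⟨w, rfl⟩
    exact ⟨w * p, by rw [mul_assoc, h1]⟩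
  · rintro ⟨w, rfl⟩
    exact ⟨w * q, by rw [mul_assoc, h2]⟩

/-- A regular semigroup is `L`-unipotent iff `e*f*e = f*e` for all idempotents `e, f`. -/
theorem stmt5 {S : Type*} [Semigroup S] (hS : IsRegularSemigroup S) :
    IsLUnipotent S ↔ ∀ e f : S, e * e = e → f * f = f → e * f * e = f * e := by
  constructor
  · rintro ⟨-, hU⟩ e f he hf
    obtain ⟨y₀, hy⟩ := hS (f * e)
    have he1 : ∀ t : S, e * (e * t) = e * t := fun t => by rw [← mul_assoc, he]
    have hf1 : ∀ t : S, f * (f * t) = f * t := fun t => by rw [← mul_assoc, hf]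
    have hyb : f * (e * (y₀ * (f * e))) = f * e := by
      simpa [mul_assoc] using hy
    have hyc : ∀ t : S, f * (e * (y₀ * (f * (e * t)))) = f * (e * t) := fun t => by
      have := congrArg (· * t) hy
      simpa [mul_assoc] using this
    set x := e * (y₀ * (f * e) * y₀) * f with hxdef
    have hxx : x * x = x := by
      simp only [hxdef, mul_assoc, he1, hf1, hyb, hyc, he, hf]
    have hhh : (f * x) * (f * x) = f * x := by
      simp only [hxdef, mul_assoc, he1, hf1, hyb, hyc, he, hf]
    have hhx : (f * x) * x = f * x := by
      simp only [hxdef, mul_assoc, he1, hf1, hyb, hyc, he, hf]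
    have hxh : x * (f * x) = x := by
      simp only [hxdef, mul_assoc, he1, hf1, hyb, hyc, he, hf]
    have hfx : f * x = x := hU (f * x) x hhh hxx (lid_eq hhx hxh)
    have h1 : f * (x * e) = f * e := by
      simp only [hxdef, mul_assoc, he1, hf1, hyb, hyc, he, hf]
    have hfe : x * e = f * e := by
      calc x * e = (f * x) * e := by rw [hfx]
        _ = f * (x * e) := mul_assoc _ _ _
        _ = f * e := h1
    have hPP : (f * e) * (f * e) = f * e := by
      rw [← hfe]
      simp only [hxdef, mul_assoc, he1, hf1, hyb, hyc, he, hf]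
    have hQQ : (e * (f * e)) * (e * (f * e)) = e * (f * e) := by
      rw [← hfe]
      simp only [hxdef, mul_assoc, he1, hf1, hyb, hyc, he, hf]
    have hPQ : (f * e) * (e * (f * e)) = f * e := by
      rw [← hfe]
      simp only [hxdef, mul_assoc, he1, hf1, hyb, hyc, he, hf]
    have hQP : (e * (f * e)) * (f * e) = e * (f * e) := by
      rw [← hfe]
      simp only [hxdef, mul_assoc, he1, hf1, hyb, hyc, he, hf]
    have hfinal : f * e = e * (f * e) := hU (f * e) (e * (f * e)) hPP hQQ (lid_eq hPQ hQP)
    rw [mul_assoc]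
    exact hfinal.symm
  · intro hid
    refine ⟨hS, fun e f he hf hL => ?_⟩
    obtain ⟨u, hu⟩ : e ∈ leftIdeal f := by rw [← hL]; exact ⟨e, he.symm⟩
    obtain ⟨v, hv⟩ : f ∈ leftIdeal e := by rw [hL]; exact ⟨f, hf.symm⟩
    have h1 : e * f = e := by rw [hu, mul_assoc, hf]
    have h2 : f * e = f := by rw [hv, mul_assoc, he]
    have h3 := hid e f he hf
    rw [h1, h2, he] at h3
    exact h3
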